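/- Let V₀ and V₁ be the open balls of radius 1/2 in ℝ² around (0,0) and (1/2,1/2) respectively, and let C∞ = ⟨s⟩ ≤ D∞ act diagonally on ℝ². Then the collection V' = { g·V₀ : g ∈ C∞ } ∪ { g·V₁ : g ∈ C∞ } covers the diagonal Δ = { (x,x) : x ∈ ℝ }; moreover for every element of V', its stabilizer in D∞ (under the diagonal action) is finite, and for every g ∈ D∞ and V ∈ V', either g·V ∩ V = ∅ or g·V = V. -/

import Mathlib

open DihedralGroup

/-- The standard action of `D∞ = DihedralGroup 0` on `ℝ`. -/
noncomputable def dinfSmul : DihedralGroup 0 → ℝ → ℝ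
  | r i, x => x + ((show ℤ from i) : ℝ)
  | sr i, x => -x - ((show ℤ from i) : ℝ)

/-- The diagonal `D∞`-action on `ℝ²`. -/
noncomputable def dinfSmul2 (g : DihedralGroup 0) (p : ℝ × ℝ) : ℝ × ℝ :=
  (dinfSmul g p.1, dinfSmul g p.2)

/-- The collection `V' = {g·V₀ : g ∈ C∞} ∪ {g·V₁ : g ∈ C∞}`, where `V₀, V₁` are
the open balls of radius `1/2` around `(0,0)` and `(1/2,1/2)`, and
`C∞ = ⟨s⟩ = {r n : n ∈ ℤ}` acts diagonally. -/
noncomputable def VColl : Set (Set (ℝ × ℝ)) :=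
  {S | ∃ n : ℤ, S = dinfSmul2 (r (show ZMod 0 from n)) '' Metric.ball ((0 : ℝ), (0 : ℝ)) (1/2) ∨
       S = dinfSmul2 (r (show ZMod 0 from n)) '' Metric.ball ((1/2 : ℝ), (1/2 : ℝ)) (1/2)}

lemma mem_ball_iff' (a b c d ρ : ℝ) :
    ((a,b) : ℝ×ℝ) ∈ Metric.ball ((c,d) : ℝ×ℝ) ρ ↔ |a-c| < ρ ∧ |b-d| < ρ := by
  simp [Metric.mem_ball, Prod.dist_eq, Real.dist_eq, max_lt_iff]

lemma img_r (n : ℤ) (c ρ : ℝ) :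
    dinfSmul2 (r (show ZMod 0 from n)) '' Metric.ball ((c,c) : ℝ×ℝ) ρ =
      Metric.ball ((c + n, c + n) : ℝ×ℝ) ρ := by
  ext ⟨a, b⟩
  constructor
  · rintro ⟨⟨x, y⟩, hq, heq⟩
    rw [mem_ball_iff'] at hq
    rw [← heq]
    simp only [dinfSmul2, dinfSmul, mem_ball_iff']
    constructor
    · have : x + (n:ℝ) - (c + n) = x - c := by ring
      rw [this]; exact hq.1
    · have : y + (n:ℝ) - (c + n) = y - c := by ring
      rw [this]; exact hq.2
  · intro h
    rw [mem_ball_iff'] at h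
    refine ⟨(a - n, b - n), ?_, ?_⟩
    · rw [mem_ball_iff']
      constructor
      · have : a - (n:ℝ) - c = a - (c + n) := by ring
        rw [this]; exact h.1
      · have : b - (n:ℝ) - c = b - (c + n) := by ring
        rw [this]; exact h.2
    · simp [dinfSmul2, dinfSmul]

lemma img_sr (n : ℤ) (c ρ : ℝ) :
    dinfSmul2 (sr (show ZMod 0 from n)) '' Metric.ball ((c,c) : ℝ×ℝ) ρ =
      Metric.ball ((-c - n, -c - n) : ℝ×ℝ) ρ := by
  ext ⟨a, b⟩
  constructor
  · rintro ⟨⟨x, y⟩, hq, heq⟩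
    rw [mem_ball_iff'] at hq
    rw [← heq]
    simp only [dinfSmul2, dinfSmul, mem_ball_iff']
    constructor
    · have : -x - (n:ℝ) - (-c - n) = -(x - c) := by ring
      rw [this, abs_neg]; exact hq.1
    · have : -y - (n:ℝ) - (-c - n) = -(y - c) := by ring
      rw [this, abs_neg]; exact hq.2
  · intro h
    rw [mem_ball_iff'] at h
    refine ⟨(-a - n, -b - n), ?_, ?_⟩
    · rw [mem_ball_iff']
      constructor
      · have : -a - (n:ℝ) - c = -(a - (-c - n)) := by ring
        rw [this, abs_neg]; exact h.1
      · have : -b - (n:ℝ) - c = -(b - (-c - n)) := by ring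
        rw [this, abs_neg]; exact h.2
    · simp only [dinfSmul2, dinfSmul, Prod.mk.injEq]; constructor <;> ring

lemma ball_disj_or_eq (a c : ℝ) (k : ℤ) (hk : a - c = k) :
    Metric.ball ((a,a) : ℝ×ℝ) (1/2) ∩ Metric.ball ((c,c) : ℝ×ℝ) (1/2) = ∅ ∨
      Metric.ball ((a,a) : ℝ×ℝ) (1/2) = Metric.ball ((c,c) : ℝ×ℝ) (1/2) := by
  rcases eq_or_ne a c with h | h
  · right; rw [h]
  · left
    ext ⟨x, y⟩
    simp only [Set.mem_inter_iff, mem_ball_iff', Set.mem_empty_iff_false, iff_false]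
    rintro ⟨⟨h1, _⟩, ⟨h2, _⟩⟩
    have hk1 : (1:ℝ) ≤ |a - c| := by
      have : k ≠ 0 := by
        intro h0; apply h; have := hk; rw [h0] at this; push_cast at this; linarith
      calc (1:ℝ) = ((1:ℤ) : ℝ) := by norm_num
        _ ≤ |(k : ℝ)| := by
            rw [← Int.cast_abs]; exact_mod_cast Int.one_le_abs this
        _ = |a - c| := by rw [hk]
    have : |a - c| < 1 := by
      have e1 := abs_lt.mp h1
      have e2 := abs_lt.mp h2
      rw [abs_lt]; constructor <;> linarith
    linarith

/-- Every member of VColl is a diagonal ball centered at `c` with `2c ∈ ℤ`. -/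
lemma VColl_form {S : Set (ℝ × ℝ)} (hS : S ∈ VColl) :
    ∃ (c : ℝ) (t : ℤ), 2 * c = t ∧ S = Metric.ball ((c, c) : ℝ×ℝ) (1/2) := by
  obtain ⟨n, h | h⟩ := hS
  · exact ⟨(0:ℝ) + n, 2 * n, by push_cast; ring, by rw [h, img_r]⟩
  · exact ⟨(1/2 : ℝ) + n, 2 * n + 1, by push_cast; ring, by rw [h, img_r]⟩

/-- The collection `V'` covers the diagonal `Δ ⊂ ℝ²`, each of its members has
finite stabilizer in `D∞`, and for every `g ∈ D∞` and `V ∈ V'` either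
`g·V ∩ V = ∅` or `g·V = V`. -/
theorem stmt_10 :
    (∀ x : ℝ, ∃ S ∈ VColl, ((x, x) : ℝ × ℝ) ∈ S) ∧
    (∀ S ∈ VColl, Set.Finite {g : DihedralGroup 0 | dinfSmul2 g '' S = S}) ∧
    (∀ g : DihedralGroup 0, ∀ S ∈ VColl,
      (dinfSmul2 g '' S) ∩ S = ∅ ∨ dinfSmul2 g '' S = S) := by
  refine ⟨?_, ?_, ?_⟩
  · -- coverage
    intro x
    set m : ℤ := round (2 * x) with hm
    have hmx : |2 * x - m| ≤ 1/2 := abs_sub_round (2 * x)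
    rcases Int.even_or_odd m with ⟨k, hk⟩ | ⟨k, hk⟩
    · refine ⟨_, ⟨k, Or.inl rfl⟩, ?_⟩
      rw [img_r, mem_ball_iff']
      have : |x - (0 + (k:ℝ))| < 1/2 := by
        rw [abs_lt]; rw [hk] at hmx; push_cast at hmx
        rcases abs_le.mp hmx with ⟨h1, h2⟩
        constructor <;> linarith
      exact ⟨this, this⟩
    · refine ⟨_, ⟨k, Or.inr rfl⟩, ?_⟩
      rw [img_r, mem_ball_iff']
      have : |x - (1/2 + (k:ℝ))| < 1/2 := by
        rw [abs_lt]; rw [hk] at hmx; push_cast at hmx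
        rcases abs_le.mp hmx with ⟨h1, h2⟩
        constructor <;> linarith
      exact ⟨this, this⟩
  · -- finite stabilizers
    intro S hS
    obtain ⟨c, t, ht, rfl⟩ := VColl_form hS
    apply Set.Finite.subset
      ((Set.finite_singleton (sr (show ZMod 0 from (-t)))).insert (r (show ZMod 0 from 0)))
    rintro (⟨i⟩ | ⟨i⟩) hg
    · have hi : (show ℤ from i) = 0 := by
        have hc : ((c, c) : ℝ×ℝ) ∈ Metric.ball ((c,c) : ℝ×ℝ) (1/2) := by
          rw [mem_ball_iff']; norm_num
        rw [← hg, img_r i, mem_ball_iff'] at hc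
        have h1 := hc.1
        have h2 : |((show ℤ from i) : ℝ)| < 1/2 := by
          have e : c - (c + ((show ℤ from i) : ℝ)) = -((show ℤ from i) : ℝ) := by ring
          rw [e, abs_neg] at h1; exact h1
        by_contra hne
        have h3 : (1:ℝ) ≤ |((show ℤ from i) : ℝ)| := by
          rw [← Int.cast_abs (R := ℝ) (a := show ℤ from i)]; exact_mod_cast Int.one_le_abs hne
        linarith
      left; rw [show (r i : DihedralGroup 0) = r (show ZMod 0 from (show ℤ from i)) from rfl, hi]; rfl
    · have hi : (show ℤ from i) = -t := by
        have hc : ((c, c) : ℝ×ℝ) ∈ Metric.ball ((c,c) : ℝ×ℝ) (1/2) := by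
          rw [mem_ball_iff']; norm_num
        rw [← hg, img_sr i, mem_ball_iff'] at hc
        have h1 := hc.1
        have h2 : |((show ℤ from i) : ℝ) + t| < 1/2 := by
          have e : c - (-c - ((show ℤ from i) : ℝ)) = ((show ℤ from i) : ℝ) + 2 * c := by ring
          rw [e, ht] at h1; exact h1
        by_contra hne
        have hne' : (show ℤ from i) + t ≠ 0 := by
          intro h0; apply hne; linarith
        have h3 : (1:ℝ) ≤ |((show ℤ from i) : ℝ) + t| := by
          rw [show ((show ℤ from i) : ℝ) + t = (((show ℤ from i) + t : ℤ) : ℝ) by exact (Int.cast_add (R := ℝ) (show ℤ from i) t).symm,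
            ← Int.cast_abs]
          exact_mod_cast Int.one_le_abs hne'
        linarith
      right; rw [show (sr i : DihedralGroup 0) = sr (show ZMod 0 from (show ℤ from i)) from rfl, hi]
      rfl
  · -- disjoint or equal
    intro g S hS
    obtain ⟨c, t, ht, rfl⟩ := VColl_form hS
    rcases g with i | i
    · rw [img_r i]
      rcases ball_disj_or_eq (c + (show ℤ from i)) c (show ℤ from i) (by ring) with h | h
      · left; exact h
      · right; exact h
    · rw [img_sr i]
      rcases ball_disj_or_eq (-c - (show ℤ from i)) c (-(show ℤ from i) - t) (by rw [Int.cast_sub (R := ℝ), Int.cast_neg (R := ℝ)]; linarith) with h | h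
      · left; exact h
      · right; exact h
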